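/- Let X and Y be two sequences of moments: suppose (μ_k) are given by μ_k = Σ_{m=0}^{k-1} (k!/(m!(m+1)!(k-m)!))·(d^m/du^m F_q^{k-m}(u))|_{u=0} where F_q(u) = e_q(u)Ψ'(e_q(u)) + e_q(u)/(e_q(u)-1) - 1/u with e_q(u) = (1-qu)^{-1/q}, and (ν_k) are given by the same formula with q replaced by -q and Ψ(u) replaced by Ψ(u^{-1}). Then ν_k = Σ_{j=0}^k C(k,j)(-1)^j μ_j, i.e., the ν_k are the moments of the pushforward x ↦ 1 - x of the measure with moments (μ_k). -/

import Mathlib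

open Finset Filter Topology

private lemma iD_open {f : ℝ → ℝ} {U : Set ℝ} (hU : IsOpen U) {x : ℝ}
    (hx : x ∈ U) (n : ℕ) : iteratedDerivWithin n f U x = iteratedDeriv n f x := by
  rw [iteratedDerivWithin_eq_iteratedFDerivWithin, iteratedDeriv_eq_iteratedFDeriv,
    iteratedFDerivWithin_of_isOpen n hU hx]

private lemma iD_zero_fun (n : ℕ) (x : ℝ) : iteratedDeriv n (fun _ : ℝ => (0:ℝ)) x = 0 := by
  rw [iteratedDeriv_eq_iteratedFDeriv]
  simp [iteratedFDeriv_zero_fun]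

private lemma iD_one_fun (n : ℕ) : iteratedDeriv n (fun _ : ℝ => (1:ℝ)) 0 = if n = 0 then 1 else 0 := by
  rcases eq_or_ne n 0 with h | h
  · subst h; simp [iteratedDeriv_zero]
  · rw [if_neg h, iteratedDeriv_eq_iteratedFDeriv, iteratedFDeriv_const_of_ne h]
    simp

private lemma iD_sum_mul {ι : Type*} (s : Finset ι) (c : ι → ℝ) (f : ι → ℝ → ℝ)
    {U : Set ℝ} (hU : IsOpen U) {x : ℝ} (hx : x ∈ U) (n : ℕ)
    (hf : ∀ i ∈ s, ContDiffOn ℝ n (f i) U) :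
    iteratedDeriv n (fun u => ∑ i ∈ s, c i * f i u) x
      = ∑ i ∈ s, c i * iteratedDeriv n (f i) x := by
  classical
  induction s using Finset.induction with
  | empty => simp [iD_zero_fun]
  | insert a s ha ih =>
    have hfa : ContDiffOn ℝ n (f a) U := hf a (Finset.mem_insert_self a s)
    have hfs : ∀ i ∈ s, ContDiffOn ℝ n (f i) U := fun i hi => hf i (Finset.mem_insert_of_mem hi)
    have h1 : ContDiffOn ℝ n (fun u => c a * f a u) U := contDiffOn_const.mul hfa
    have h2 : ContDiffOn ℝ n (fun u => ∑ i ∈ s, c i * f i u) U := by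
      apply ContDiffOn.sum
      intro i hi
      exact contDiffOn_const.mul (hfs i hi)
    have hadd := iteratedDerivWithin_add (f := fun u => c a * f a u)
      (g := fun u => ∑ i ∈ s, c i * f i u) hx hU.uniqueDiffOn (h1 x hx) (h2 x hx)
    rw [iD_open hU hx, iD_open hU hx, iD_open hU hx] at hadd
    have hmul := iteratedDerivWithin_const_mul (f := f a) hx hU.uniqueDiffOn (c a) (hfa x hx)
    rw [iD_open hU hx, iD_open hU hx] at hmul
    simp only [Finset.sum_insert ha]
    calc iteratedDeriv n (fun u => c a * f a u + ∑ i ∈ s, c i * f i u) x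
        = iteratedDeriv n (fun u => c a * f a u) x
          + iteratedDeriv n (fun u => ∑ i ∈ s, c i * f i u) x := hadd
      _ = c a * iteratedDeriv n (f a) x + ∑ i ∈ s, c i * iteratedDeriv n (f i) x := by
          rw [hmul, ih hfs]


private lemma key_lemma {F G : ℝ → ℝ} (hFan : AnalyticAt ℝ F 0)
    (hGH : G =ᶠ[𝓝 (0:ℝ)] fun u => 1 - F (-u)) (n m : ℕ) :
    iteratedDeriv m (fun u => G u ^ n) 0
      = ∑ i ∈ range (n+1), (n.choose i : ℝ) * (-1)^(i+m)
          * iteratedDeriv m (fun u => F u ^ i) 0 := by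
  obtain ⟨U₁, hU₁, hU₁o, hU₁0⟩ := eventually_nhds_iff.mp hFan.eventually_analyticAt
  set U : Set ℝ := U₁ ∩ Neg.neg ⁻¹' U₁ with hUdef
  have hUo : IsOpen U := hU₁o.inter (hU₁o.preimage continuous_neg)
  have hU0 : (0:ℝ) ∈ U := by
    constructor
    · exact hU₁0
    · show -(0:ℝ) ∈ U₁; simpa using hU₁0
  have hFan' : AnalyticOnNhd ℝ F U₁ := fun y hy => hU₁ y hy
  have hFcd : ContDiffOn ℝ m F U₁ := hFan'.contDiffOn_of_completeSpace
  have hcd : ∀ i : ℕ, ContDiffOn ℝ m (fun u => F (-u) ^ i) U := by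
    intro i
    have hneg : ContDiffOn ℝ m (fun u : ℝ => -u) U := contDiff_neg.contDiffOn
    exact (hFcd.comp hneg (fun u hu => hu.2)).pow i
  have step1 : iteratedDeriv m (fun u => G u ^ n) 0
      = iteratedDeriv m (fun u => ∑ i ∈ range (n+1),
          ((n.choose i : ℝ) * (-1)^i) * (F (-u)) ^ i) 0 := by
    apply Filter.EventuallyEq.iteratedDeriv_eq
    filter_upwards [hGH] with u hu
    rw [hu]
    rw [show (1:ℝ) - F (-u) = (-(F (-u))) + 1 by ring, add_pow]
    refine Finset.sum_congr rfl fun i hi => ?_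
    rw [one_pow, neg_pow]
    ring
  rw [step1, iD_sum_mul (range (n+1)) _ _ hUo hU0 m (fun i _ => hcd i)]
  refine Finset.sum_congr rfl fun i hi => ?_
  have hc := iteratedDeriv_comp_neg m (fun v => F v ^ i) 0
  simp only [neg_zero, smul_eq_mul] at hc
  rw [hc, pow_add]
  ring

private lemma coeff_eq (k m i : ℕ) (hk : m + i + 1 ≤ k) :
    (k.choose (m + i + 1) : ℝ) *
      (((m + i + 1).factorial : ℝ) /
        ((m.factorial : ℝ) * ((m + 1).factorial : ℝ) * ((i + 1).factorial : ℝ)))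
    = ((k.factorial : ℝ) /
        ((m.factorial : ℝ) * ((m + 1).factorial : ℝ) * ((k - m).factorial : ℝ)))
      * ((k - m).choose (i + 1) : ℝ) := by
  obtain ⟨a, ha⟩ : ∃ a, k = m + i + 1 + a := ⟨k - (m+i+1), by omega⟩
  subst ha
  have h1 : m + i + 1 + a - m = i + 1 + a := by omega
  have h2 : m + i + 1 + a - (m + i + 1) = a := by omega
  rw [h1, Nat.cast_choose ℝ (by omega : m + i + 1 ≤ m + i + 1 + a),
    Nat.cast_choose ℝ (by omega : i + 1 ≤ i + 1 + a), h2, Nat.add_sub_cancel_left]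
  have f0 : ((m.factorial : ℝ)) ≠ 0 := Nat.cast_ne_zero.mpr m.factorial_ne_zero
  have f1 : (((m+1).factorial : ℝ)) ≠ 0 := Nat.cast_ne_zero.mpr (m+1).factorial_ne_zero
  have f2 : (((i+1).factorial : ℝ)) ≠ 0 := Nat.cast_ne_zero.mpr (i+1).factorial_ne_zero
  have f3 : ((a.factorial : ℝ)) ≠ 0 := Nat.cast_ne_zero.mpr a.factorial_ne_zero
  have f4 : (((m+i+1).factorial : ℝ)) ≠ 0 := Nat.cast_ne_zero.mpr (m+i+1).factorial_ne_zero
  have f5 : (((i+1+a).factorial : ℝ)) ≠ 0 := Nat.cast_ne_zero.mpr (i+1+a).factorial_ne_zero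
  field_simp

private lemma comb_lemma (k : ℕ) (hk : 1 ≤ k) (A : ℕ → ℕ → ℝ)
    (hA0 : ∀ m, A m 0 = if m = 0 then 1 else 0) :
    ∑ m ∈ range k, (k.factorial : ℝ) /
        ((m.factorial : ℝ) * ((m + 1).factorial : ℝ) * ((k - m).factorial : ℝ)) *
        ∑ i ∈ range (k - m + 1), ((k - m).choose i : ℝ) * (-1)^(i + m) * A m i
    = 1 + ∑ j ∈ range k, (k.choose (j+1) : ℝ) * (-1)^(j+1) *
        ∑ m ∈ range (j+1), ((j+1).factorial : ℝ) /
          ((m.factorial : ℝ) * ((m + 1).factorial : ℝ) * ((j + 1 - m).factorial : ℝ))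
          * A m (j + 1 - m) := by
  have lhs_split : ∀ m ∈ range k,
      (k.factorial : ℝ) /
        ((m.factorial : ℝ) * ((m + 1).factorial : ℝ) * ((k - m).factorial : ℝ)) *
        ∑ i ∈ range (k - m + 1), ((k - m).choose i : ℝ) * (-1)^(i + m) * A m i
      = (∑ i ∈ range (k - m), (k.factorial : ℝ) /
          ((m.factorial : ℝ) * ((m + 1).factorial : ℝ) * ((k - m).factorial : ℝ)) *
          (((k - m).choose (i+1) : ℝ) * (-1)^(i + 1 + m) * A m (i+1)))
        + (k.factorial : ℝ) /
          ((m.factorial : ℝ) * ((m + 1).factorial : ℝ) * ((k - m).factorial : ℝ)) *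
          ((-1)^m * A m 0) := by
    intro m hm
    rw [Finset.sum_range_succ', mul_add, Finset.mul_sum]
    simp
  rw [Finset.sum_congr rfl lhs_split, Finset.sum_add_distrib]
  have second : ∑ m ∈ range k, (k.factorial : ℝ) /
        ((m.factorial : ℝ) * ((m + 1).factorial : ℝ) * ((k - m).factorial : ℝ)) *
        ((-1)^m * A m 0) = 1 := by
    rw [Finset.sum_eq_single_of_mem 0 (Finset.mem_range.mpr hk)]
    · simp [hA0 0, Nat.factorial]
      exact k.factorial_ne_zero
    · intro m _ hm0
      simp [hA0 m, hm0]
  rw [second]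
  rw [add_comm]
  congr 1
  have rhs_expand : ∀ j ∈ range k,
      (k.choose (j+1) : ℝ) * (-1)^(j+1) *
        ∑ m ∈ range (j+1), ((j+1).factorial : ℝ) /
          ((m.factorial : ℝ) * ((m + 1).factorial : ℝ) * ((j + 1 - m).factorial : ℝ))
          * A m (j + 1 - m)
      = ∑ m ∈ range (j+1), (k.choose (j+1) : ℝ) * (-1)^(j+1) *
          (((j+1).factorial : ℝ) /
          ((m.factorial : ℝ) * ((m + 1).factorial : ℝ) * ((j + 1 - m).factorial : ℝ))
          * A m (j + 1 - m)) := by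
    intro j _; rw [Finset.mul_sum]
  rw [Finset.sum_congr rfl rhs_expand]
  rw [Finset.sum_sigma', Finset.sum_sigma']
  refine Finset.sum_nbij' (fun x => (⟨x.1 + x.2, x.1⟩ : Σ _ : ℕ, ℕ))
    (fun x => (⟨x.2, x.1 - x.2⟩ : Σ _ : ℕ, ℕ)) ?_ ?_ ?_ ?_ ?_
  · rintro ⟨m, i⟩ hx
    simp only [Finset.mem_sigma, Finset.mem_range] at hx ⊢
    omega
  · rintro ⟨j, m⟩ hx
    simp only [Finset.mem_sigma, Finset.mem_range] at hx ⊢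
    omega
  · rintro ⟨m, i⟩ _
    simp
  · rintro ⟨j, m⟩ hx
    simp only [Finset.mem_sigma, Finset.mem_range] at hx
    have h : m + (j - m) = j := by omega
    simp [h]
  · rintro ⟨m, i⟩ hx
    simp only [Finset.mem_sigma, Finset.mem_range] at hx
    simp only []
    have h1 : m + i + 1 - m = i + 1 := by omega
    have h2 : m + i + 1 ≤ k := by omega
    show (k.factorial : ℝ) /
          ((m.factorial : ℝ) * ((m + 1).factorial : ℝ) * ((k - m).factorial : ℝ)) *
          (((k - m).choose (i+1) : ℝ) * (-1)^(i + 1 + m) * A m (i+1))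
        = (k.choose (m + i + 1) : ℝ) * (-1)^(m + i + 1) *
          (((m + i + 1).factorial : ℝ) /
          ((m.factorial : ℝ) * ((m + 1).factorial : ℝ) * ((m + i + 1 - m).factorial : ℝ))
          * A m (m + i + 1 - m))
    rw [h1]
    have hc := coeff_eq k m i h2
    linear_combination (-((-1:ℝ)^(m+i+1) * A m (i+1))) * hc

private lemma GH_eq {q : ℝ} (hq0 : q ≠ 0) {Ψ F G : ℝ → ℝ} (hΨ : AnalyticAt ℝ Ψ 1)
    (hFan : AnalyticAt ℝ F 0) (hGan : AnalyticAt ℝ G 0)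
    (hF : ∀ᶠ u in nhdsWithin (0 : ℝ) {(0 : ℝ)}ᶜ, F u =
      (1 - q * u) ^ ((-1 : ℝ) / q) * deriv Ψ ((1 - q * u) ^ ((-1 : ℝ) / q)) +
        (1 - q * u) ^ ((-1 : ℝ) / q) / ((1 - q * u) ^ ((-1 : ℝ) / q) - 1) - 1 / u)
    (hG : ∀ᶠ u in nhdsWithin (0 : ℝ) {(0 : ℝ)}ᶜ, G u =
      (1 + q * u) ^ ((1 : ℝ) / q) * deriv (fun v => Ψ v⁻¹) ((1 + q * u) ^ ((1 : ℝ) / q)) +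
        (1 + q * u) ^ ((1 : ℝ) / q) / ((1 + q * u) ^ ((1 : ℝ) / q) - 1) - 1 / u) :
    G =ᶠ[𝓝 (0:ℝ)] fun u => 1 - F (-u) := by
  -- the map u ↦ -u preserves the punctured neighborhood filter
  have hnegt : Tendsto (fun u : ℝ => -u) (𝓝[≠] (0:ℝ)) (𝓝[≠] (0:ℝ)) := by
    apply tendsto_nhdsWithin_of_tendsto_nhds_of_eventually_within
    · have : Tendsto (fun u : ℝ => -u) (𝓝 (0:ℝ)) (𝓝 (0:ℝ)) := by
        simpa using (continuous_neg (G := ℝ)).tendsto (0:ℝ)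
      exact this.mono_left nhdsWithin_le_nhds
    · filter_upwards [self_mem_nhdsWithin] with u hu
      simp only [Set.mem_compl_iff, Set.mem_singleton_iff] at hu ⊢
      exact neg_ne_zero.mpr hu
  have hFneg : ∀ᶠ u in 𝓝[≠] (0:ℝ), F (-u) =
      (1 - q * (-u)) ^ ((-1 : ℝ) / q) * deriv Ψ ((1 - q * (-u)) ^ ((-1 : ℝ) / q)) +
        (1 - q * (-u)) ^ ((-1 : ℝ) / q) / ((1 - q * (-u)) ^ ((-1 : ℝ) / q) - 1) - 1 / (-u) :=
    hnegt.eventually hF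
  -- positivity of the base
  have hbase : Tendsto (fun u : ℝ => 1 + q * u) (𝓝 (0:ℝ)) (𝓝 1) := by
    have : Continuous fun u : ℝ => 1 + q * u := by continuity
    simpa using this.tendsto 0
  have hpos : ∀ᶠ u in 𝓝 (0:ℝ), 0 < 1 + q * u := hbase.eventually (eventually_gt_nhds one_pos)
  -- w tends to 1
  have hrp : ContinuousAt (fun x : ℝ => x ^ ((-1:ℝ) / q)) 1 :=
    Real.continuousAt_rpow_const 1 _ (Or.inl one_ne_zero)
  have hw1 : Tendsto (fun u : ℝ => (1 + q * u) ^ ((-1:ℝ) / q)) (𝓝 (0:ℝ)) (𝓝 1) := by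
    have := hrp.tendsto.comp hbase
    simpa [Real.one_rpow, Function.comp_def] using this
  have hΨw : ∀ᶠ u in 𝓝 (0:ℝ), AnalyticAt ℝ Ψ ((1 + q * u) ^ ((-1:ℝ) / q)) :=
    hw1.eventually hΨ.eventually_analyticAt
  -- equality on the punctured neighborhood
  have hev : ∀ᶠ u in 𝓝[≠] (0:ℝ), G u = 1 - F (-u) := by
    filter_upwards [self_mem_nhdsWithin, hpos.filter_mono nhdsWithin_le_nhds,
      hΨw.filter_mono nhdsWithin_le_nhds, hFneg, hG] with u hu0 hpu hΨa hFu hGu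
    have hu0' : u ≠ 0 := by simpa using hu0
    have hbe : (1:ℝ) - q * (-u) = 1 + q * u := by ring
    rw [hbe] at hFu
    have hw0 : 0 < (1 + q * u) ^ ((-1:ℝ) / q) := Real.rpow_pos_of_pos hpu _
    have he0 : 0 < (1 + q * u) ^ ((1:ℝ) / q) := Real.rpow_pos_of_pos hpu _
    have hwe : (1 + q * u) ^ ((-1:ℝ) / q) = ((1 + q * u) ^ ((1:ℝ) / q))⁻¹ := by
      rw [show ((-1:ℝ) / q) = -((1:ℝ)/q) by ring, Real.rpow_neg hpu.le]
    have hw1' : (1 + q * u) ^ ((-1:ℝ) / q) ≠ 1 := by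
      intro hcon
      have hlog : Real.log ((1 + q * u) ^ ((-1:ℝ) / q))
          = ((-1:ℝ) / q) * Real.log (1 + q * u) := Real.log_rpow hpu _
      rw [hcon, Real.log_one] at hlog
      have hq' : ((-1:ℝ) / q) ≠ 0 := div_ne_zero (by norm_num) hq0
      have hL : Real.log (1 + q * u) = 0 := by
        rcases mul_eq_zero.mp hlog.symm with h | h
        · exact absurd h hq'
        · exact h
      rcases Real.log_eq_zero.mp hL with h | h | h
      · linarith
      · have h2 : q * u = 0 := by linarith
        rcases mul_eq_zero.mp h2 with h' | h'
        · exact hq0 h'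
        · exact hu0' h'
      · linarith
    -- derivative of Ψ ∘ inv at e
    have hΨd : HasDerivAt Ψ (deriv Ψ ((1 + q * u) ^ ((-1:ℝ) / q)))
        (((1 + q * u) ^ ((1:ℝ) / q))⁻¹) := by
      rw [← hwe]; exact hΨa.differentiableAt.hasDerivAt
    have hinv : HasDerivAt (fun y : ℝ => y⁻¹) (-(((1 + q * u) ^ ((1:ℝ) / q)) ^ 2)⁻¹)
        ((1 + q * u) ^ ((1:ℝ) / q)) := hasDerivAt_inv he0.ne'
    have hde : deriv (fun v : ℝ => Ψ v⁻¹) ((1 + q * u) ^ ((1:ℝ) / q))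
        = deriv Ψ ((1 + q * u) ^ ((-1:ℝ) / q)) * (-(((1 + q * u) ^ ((1:ℝ) / q)) ^ 2)⁻¹) :=
      (hΨd.comp _ hinv).deriv
    rw [hGu, hFu, hde]
    generalize hD : deriv Ψ ((1 + q * u) ^ ((-1:ℝ) / q)) = D at *
    generalize hwd : (1 + q * u) ^ ((-1:ℝ) / q) = w at *
    generalize hed : (1 + q * u) ^ ((1:ℝ) / q) = e at *
    subst hwe
    have he1 : e ≠ 1 := by
      intro hcon
      rw [hcon] at hw1'
      simp at hw1'
    have hem1 : e - 1 ≠ 0 := sub_ne_zero.mpr he1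
    have heim1 : e⁻¹ - 1 ≠ 0 := by
      rw [sub_ne_zero]
      intro hcon
      exact he1 (by rw [← inv_inv e, hcon, inv_one])
    have h1e : (1:ℝ) - e ≠ 0 := fun h => he1 (by linarith)
    field_simp [hu0', h1e, hem1, he0.ne']
    ring
  -- extend to the full neighborhood using continuity
  have hGc : Tendsto G (𝓝[≠] (0:ℝ)) (𝓝 (G 0)) := hGan.continuousAt.continuousWithinAt
  have hFc : ContinuousAt (fun u : ℝ => 1 - F (-u)) 0 := by
    have h1 : ContinuousAt (fun u : ℝ => F (-u)) 0 := by
      have h2 : ContinuousAt F (-(0:ℝ)) := by simpa using hFan.continuousAt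
      exact h2.comp (continuous_neg.continuousAt)
    exact continuousAt_const.sub h1
  have hHt : Tendsto (fun u : ℝ => 1 - F (-u)) (𝓝[≠] (0:ℝ)) (𝓝 (1 - F (-0))) :=
    hFc.continuousWithinAt
  have hGt : Tendsto (fun u : ℝ => 1 - F (-u)) (𝓝[≠] (0:ℝ)) (𝓝 (G 0)) :=
    hGc.congr' hev
  have h0 : G 0 = 1 - F (-0) := tendsto_nhds_unique hGt hHt
  rw [eventually_nhdsWithin_iff] at hev
  filter_upwards [hev] with u hu
  by_cases h : u = 0
  · subst h; exact h0
  · exact hu (by simpa using h)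

/-- Duality `E[X^k] = E[(1-Y)^k]`: if `(μ_k)` are the moments given by
`μ_k = Σ_{m=0}^{k-1} (k!/(m!(m+1)!(k-m)!))·(d^m/du^m F_q^{k-m})(0)` where
`F_q(u) = e_q(u)Ψ'(e_q(u)) + e_q(u)/(e_q(u)-1) - 1/u`, `e_q(u) = (1-qu)^{-1/q}`,
and `(ν_k)` are given by the same formula with `q` replaced by `-q` and `Ψ(u)` by
`Ψ(u⁻¹)`, then `ν_k = Σ_{j=0}^k C(k,j)(-1)^j μ_j`, i.e. `(ν_k)` are the moments of
the pushforward under `x ↦ 1-x` of the measure with moments `(μ_k)`. -/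
theorem moment_duality (q : ℝ) (hq1 : -1 ≤ q) (hq2 : q ≤ 1) (hq0 : q ≠ 0)
    (Ψ : ℝ → ℝ) (hΨ : AnalyticAt ℝ Ψ 1)
    (F G : ℝ → ℝ) (hFan : AnalyticAt ℝ F 0) (hGan : AnalyticAt ℝ G 0)
    (hF : ∀ᶠ u in nhdsWithin (0 : ℝ) {(0 : ℝ)}ᶜ, F u =
      (1 - q * u) ^ ((-1 : ℝ) / q) * deriv Ψ ((1 - q * u) ^ ((-1 : ℝ) / q)) +
        (1 - q * u) ^ ((-1 : ℝ) / q) / ((1 - q * u) ^ ((-1 : ℝ) / q) - 1) - 1 / u)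
    (hG : ∀ᶠ u in nhdsWithin (0 : ℝ) {(0 : ℝ)}ᶜ, G u =
      (1 + q * u) ^ ((1 : ℝ) / q) * deriv (fun v => Ψ v⁻¹) ((1 + q * u) ^ ((1 : ℝ) / q)) +
        (1 + q * u) ^ ((1 : ℝ) / q) / ((1 + q * u) ^ ((1 : ℝ) / q) - 1) - 1 / u)
    (μ ν : ℕ → ℝ) (hμ0 : μ 0 = 1) (hν0 : ν 0 = 1)
    (hμ : ∀ k : ℕ, 1 ≤ k → μ k = ∑ m ∈ Finset.range k,
      (k.factorial : ℝ) / ((m.factorial : ℝ) * ((m + 1).factorial : ℝ) * ((k - m).factorial : ℝ)) *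
        iteratedDeriv m (fun u => F u ^ (k - m)) 0)
    (hν : ∀ k : ℕ, 1 ≤ k → ν k = ∑ m ∈ Finset.range k,
      (k.factorial : ℝ) / ((m.factorial : ℝ) * ((m + 1).factorial : ℝ) * ((k - m).factorial : ℝ)) *
        iteratedDeriv m (fun u => G u ^ (k - m)) 0) :
    ∀ k : ℕ, ν k = ∑ j ∈ Finset.range (k + 1), (k.choose j : ℝ) * (-1) ^ j * μ j := by
  intro k
  rcases Nat.eq_zero_or_pos k with hk | hk
  · subst hk
    simp [hν0, hμ0]
  · have hGH : G =ᶠ[𝓝 (0:ℝ)] fun u => 1 - F (-u) := GH_eq hq0 hΨ hFan hGan hF hG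
    have hkey : ∀ n m : ℕ, iteratedDeriv m (fun u => G u ^ n) 0
        = ∑ i ∈ range (n+1), (n.choose i : ℝ) * (-1)^(i+m)
            * iteratedDeriv m (fun u => F u ^ i) 0 :=
      fun n m => key_lemma hFan hGH n m
    have hA0 : ∀ m, iteratedDeriv m (fun u => F u ^ 0) 0 = if m = 0 then 1 else 0 := by
      intro m
      have h : (fun u : ℝ => F u ^ 0) = fun _ : ℝ => (1:ℝ) := by funext u; simp
      rw [h, iD_one_fun]
    have h1 : ν k = ∑ m ∈ range k, (k.factorial : ℝ) /
        ((m.factorial : ℝ) * ((m + 1).factorial : ℝ) * ((k - m).factorial : ℝ)) *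
        ∑ i ∈ range (k - m + 1), ((k - m).choose i : ℝ) * (-1)^(i + m)
          * iteratedDeriv m (fun u => F u ^ i) 0 := by
      rw [hν k hk]
      exact Finset.sum_congr rfl fun m hm => by rw [hkey (k - m) m]
    have h2 := comb_lemma k hk (fun m i => iteratedDeriv m (fun u => F u ^ i) 0) hA0
    have h3 : ∑ j ∈ Finset.range (k + 1), (k.choose j : ℝ) * (-1) ^ j * μ j
        = 1 + ∑ j ∈ range k, (k.choose (j+1) : ℝ) * (-1)^(j+1) *
            ∑ m ∈ range (j+1), ((j+1).factorial : ℝ) /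
              ((m.factorial : ℝ) * ((m + 1).factorial : ℝ) * ((j + 1 - m).factorial : ℝ))
              * iteratedDeriv m (fun u => F u ^ (j + 1 - m)) 0 := by
      rw [Finset.sum_range_succ']
      rw [add_comm]
      simp only [Nat.choose_zero_right, Nat.cast_one, pow_zero, one_mul, mul_one, hμ0]
      congr 1
      exact Finset.sum_congr rfl fun j hj => by rw [hμ (j+1) (by omega)]
    rw [h3]
    exact h1.trans h2
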